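/- Let n ≥ 2 and let π⁺, π⁻ be subsets of the simple roots π of sl_n with π⁺ ∪ π⁻ = π. Then both R and R_* are additively closed in Δ: if α, β ∈ R and α + β ∈ Δ, then α + β ∈ R; and if α, β ∈ R_* and α + β ∈ Δ, then α + β ∈ R_*. (Claims of Section 1.8, used in the proofs of Corollaries 3.8.4 and 4.3.2.) -/

import Mathlib

open Pointwise

noncomputable def eps (n : ℕ) (i : Fin n) : Fin n → ℝ := Pi.single i 1

/-- The roots of `sl_n`: `ε_i - ε_j` for `i ≠ j`. -/
def Delta (n : ℕ) : Set (Fin n → ℝ) :=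
  {v | ∃ i j : Fin n, i ≠ j ∧ v = eps n i - eps n j}

/-- The positive roots: `ε_i - ε_j` for `i < j`. -/
def DeltaPos (n : ℕ) : Set (Fin n → ℝ) :=
  {v | ∃ i j : Fin n, i < j ∧ v = eps n i - eps n j}

/-- The negative roots. -/
def DeltaNeg (n : ℕ) : Set (Fin n → ℝ) := -DeltaPos n

/-- The simple roots `α_i = ε_i - ε_{i+1}`. -/
def simpleRoots (n : ℕ) : Set (Fin n → ℝ) :=
  {v | ∃ i j : Fin n, (j : ℕ) = (i : ℕ) + 1 ∧ v = eps n i - eps n j}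

/-- The set of ℕ-linear combinations of elements of `S`. -/
def Nspan {n : ℕ} (S : Set (Fin n → ℝ)) : Set (Fin n → ℝ) :=
  (AddSubmonoid.closure S : AddSubmonoid (Fin n → ℝ))

/-- `R = (ℕπ⁺ ∪ (−ℕπ⁻)) ∩ Δ`. -/
def Rset (n : ℕ) (Pp Pm : Set (Fin n → ℝ)) : Set (Fin n → ℝ) :=
  (Nspan Pp ∪ -Nspan Pm) ∩ Delta n

/-- `K = Δ \ R`. -/
def Kset (n : ℕ) (Pp Pm : Set (Fin n → ℝ)) : Set (Fin n → ℝ) :=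
  Delta n \ Rset n Pp Pm

/-- `M = R ∩ (−R)`. -/
def Mset (n : ℕ) (Pp Pm : Set (Fin n → ℝ)) : Set (Fin n → ℝ) :=
  Rset n Pp Pm ∩ -Rset n Pp Pm

/-- `R_* = (−R) \ M`. -/
def RstarSet (n : ℕ) (Pp Pm : Set (Fin n → ℝ)) : Set (Fin n → ℝ) :=
  -Rset n Pp Pm \ Mset n Pp Pm

lemma eps_apply {n : ℕ} (i m : Fin n) : eps n i m = if m = i then 1 else 0 := by
  simp [eps, Pi.single_apply]

lemma eps_inj {n : ℕ} {i j : Fin n} (h : eps n i = eps n j) : i = j := by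
  by_contra hne
  have := congrFun h i
  simp [eps_apply, hne] at this

lemma eps_sub_inj {n : ℕ} {a b c d : Fin n} (hab : a ≠ b) (hcd : c ≠ d)
    (h : eps n a - eps n b = eps n c - eps n d) : a = c ∧ b = d := by
  have ha := congrFun h a
  have hb := congrFun h b
  simp only [Pi.sub_apply, eps_apply, if_pos rfl, if_neg (Ne.symm hab)] at ha hb
  constructor
  · by_contra hac
    rw [if_neg hac] at ha
    split_ifs at ha <;> norm_num at ha
  · by_contra hbd
    rw [if_neg hbd] at hb
    split_ifs at hb <;> norm_num at hb

lemma eps_decomp {n : ℕ} {a b c d p q : Fin n} (hab : a ≠ b) (hcd : c ≠ d) (hpq : p ≠ q)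
    (h : eps n a - eps n b + (eps n c - eps n d) = eps n p - eps n q) :
    (b = c ∧ a = p ∧ d = q) ∨ (a = d ∧ c = p ∧ b = q) := by
  by_cases hbc : b = c
  · left
    refine ⟨hbc, ?_⟩
    have had : a ≠ d := by
      rintro rfl
      rw [hbc] at h
      have h0 : eps n p - eps n q = 0 := by rw [← h]; abel
      exact hpq (eps_inj (sub_eq_zero.mp h0))
    have h2 : eps n a - eps n d = eps n p - eps n q := by
      rw [← h, hbc]; abel
    exact eps_sub_inj had hpq h2
  · right
    have had : a = d := by
      by_contra had
      have hb := congrFun h b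
      have ha := congrFun h a
      simp only [Pi.add_apply, Pi.sub_apply, eps_apply, if_pos rfl,
        if_neg (Ne.symm hab), if_neg hbc] at hb
      simp only [Pi.add_apply, Pi.sub_apply, eps_apply, if_pos rfl,
        if_neg hab, if_neg had] at ha
      have hbd : b ≠ d := by
        rintro rfl
        rw [if_pos rfl] at hb
        split_ifs at hb <;> norm_num at hb
      have hac : a ≠ c := by
        rintro rfl
        rw [if_pos rfl] at ha
        split_ifs at ha <;> norm_num at ha
      rw [if_neg hbd] at hb
      rw [if_neg hac] at ha
      have hap : a = p := by
        by_contra h'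
        rw [if_neg h'] at ha
        split_ifs at ha <;> norm_num at ha
      have hbq : b = q := by
        by_contra h'
        rw [if_neg h'] at hb
        split_ifs at hb <;> norm_num at hb
      rw [← hap, ← hbq, add_eq_left] at h
      exact hcd (eps_inj (sub_eq_zero.mp h))
    refine ⟨had, ?_⟩
    have h2 : eps n c - eps n b = eps n p - eps n q := by
      rw [← h, had]; abel
    exact eps_sub_inj (Ne.symm hbc) hpq h2

noncomputable def Fk (n : ℕ) (k : Fin n) : (Fin n → ℝ) →+ ℝ where
  toFun v := ∑ m ∈ Finset.univ.filter (· ≤ k), v m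
  map_zero' := by simp
  map_add' v w := by simp [Finset.sum_add_distrib]

lemma Fk_eps {n : ℕ} (k i : Fin n) : Fk n k (eps n i) = if i ≤ k then 1 else 0 := by
  simp only [Fk, AddMonoidHom.coe_mk, ZeroHom.coe_mk, eps_apply]
  rw [Finset.sum_ite_eq' ]
  simp

lemma Fk_sub {n : ℕ} (k i j : Fin n) :
    Fk n k (eps n i - eps n j) = (if i ≤ k then 1 else 0) - (if j ≤ k then 1 else 0) := by
  rw [AddMonoidHom.map_sub, Fk_eps, Fk_eps]

lemma Fk_nonneg {n : ℕ} {S : Set (Fin n → ℝ)} (hS : S ⊆ simpleRoots n) (k : Fin n)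
    {v : Fin n → ℝ} (hv : v ∈ Nspan S) : 0 ≤ Fk n k v := by
  induction hv using AddSubmonoid.closure_induction with
  | mem w hw =>
    obtain ⟨a, b, hab, rfl⟩ := hS hw
    rw [Fk_sub]
    have : b ≤ k → a ≤ k := by
      intro h
      have : (a:ℕ) ≤ (k:ℕ) := by omega
      exact this
    split_ifs with h1 h2 h2 <;> norm_num
    exact h1 (this h2)
  | zero => simp
  | add x y _ _ hx hy => rw [map_add]; positivity

lemma Fk_eq_zero {n : ℕ} {S : Set (Fin n → ℝ)} (hS : S ⊆ simpleRoots n) (k : Fin n)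
    (hk : ∀ (h1 : (k : ℕ) + 1 < n), eps n k - eps n ⟨(k : ℕ) + 1, h1⟩ ∉ S)
    {v : Fin n → ℝ} (hv : v ∈ Nspan S) : Fk n k v = 0 := by
  induction hv using AddSubmonoid.closure_induction with
  | mem w hw =>
    obtain ⟨a, b, hab, rfl⟩ := hS hw
    rw [Fk_sub]
    by_cases hak : a = k
    · exfalso
      subst hak
      have h1 : (a : ℕ) + 1 < n := hab ▸ b.isLt
      have hb : b = ⟨(a : ℕ) + 1, h1⟩ := Fin.ext hab
      exact hk h1 (hb ▸ hw)
    · have hank : (a:ℕ) ≠ (k:ℕ) := fun h => hak (Fin.ext h)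
      have hiff : a ≤ k ↔ b ≤ k := by
        simp only [Fin.le_def]
        omega
      split_ifs with h1 h2 h2
      · ring
      · exact absurd (hiff.mp h1) h2
      · exact absurd (hiff.mpr h2) h1
      · ring
  | zero => simp
  | add x y _ _ hx hy => rw [map_add, hx, hy]; ring

/-- `SChain S a b`: all simple roots `α_k`, `a ≤ k < b`, lie in `S`. -/
def SChain {n : ℕ} (S : Set (Fin n → ℝ)) (a b : ℕ) : Prop :=
  ∀ k : ℕ, a ≤ k → k < b → ∃ (hk : k < n) (hk1 : k + 1 < n),
    eps n ⟨k, hk⟩ - eps n ⟨k + 1, hk1⟩ ∈ S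

lemma SChain.mono {n : ℕ} {S : Set (Fin n → ℝ)} {a b a' b' : ℕ}
    (h : SChain S a b) (ha : a ≤ a') (hb : b' ≤ b) : SChain S a' b' :=
  fun k h1 h2 => h k (le_trans ha h1) (lt_of_lt_of_le h2 hb)

lemma SChain.concat {n : ℕ} {S : Set (Fin n → ℝ)} {a b c : ℕ}
    (h1 : SChain S a b) (h2 : SChain S b c) (hab : a ≤ b) : SChain S a c := by
  intro k hk1 hk2
  by_cases h : k < b
  · exact h1 k hk1 h
  · exact h2 k (le_of_not_gt h) hk2

lemma chain_mem_nspan {n : ℕ} {S : Set (Fin n → ℝ)} {i j : ℕ}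
    (hi : i < n) (hj : j < n) (hij : i < j) (hc : SChain S i j) :
    eps n ⟨i, hi⟩ - eps n ⟨j, hj⟩ ∈ Nspan S := by
  induction j, hij using Nat.le_induction with
  | base =>
    obtain ⟨hk, hk1, hm⟩ := hc i le_rfl (Nat.lt_succ_self i)
    exact AddSubmonoid.subset_closure hm
  | succ j hij ih =>
    have hjn : j < n := by omega
    have h1 : eps n ⟨i, hi⟩ - eps n ⟨j, hjn⟩ ∈ Nspan S :=
      ih hjn (hc.mono le_rfl (Nat.le_succ j))
    have h2 : eps n ⟨j, hjn⟩ - eps n ⟨j + 1, hj⟩ ∈ Nspan S := by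
      obtain ⟨hk, hk1, hm⟩ := hc j (by omega) (by omega)
      exact AddSubmonoid.subset_closure hm
    have := AddSubmonoid.add_mem _ h1 h2
    rwa [sub_add_sub_cancel] at this

lemma nspan_pos_iff {n : ℕ} {S : Set (Fin n → ℝ)} (hS : S ⊆ simpleRoots n)
    {i j : Fin n} (hij : i < j) :
    eps n i - eps n j ∈ Nspan S ↔ SChain S i j := by
  constructor
  · intro hv k hk1 hk2
    have hkn : k < n := lt_trans hk2 j.isLt
    have hkn1 : k + 1 < n := by have := j.isLt; omega
    refine ⟨hkn, hkn1, ?_⟩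
    by_contra hmem
    have h0 := Fk_eq_zero hS ⟨k, hkn⟩ (fun h1 => hmem) hv
    rw [Fk_sub] at h0
    have hik : i ≤ (⟨k, hkn⟩ : Fin n) := by simp only [Fin.le_def, Fin.val_mk]; exact hk1
    have hjk : ¬ j ≤ (⟨k, hkn⟩ : Fin n) := by simp only [Fin.le_def, Fin.val_mk]; omega
    rw [if_pos hik, if_neg hjk] at h0
    norm_num at h0
  · intro hc
    have := chain_mem_nspan i.isLt j.isLt (by exact hij) hc
    simpa using this

lemma nspan_neg {n : ℕ} {S : Set (Fin n → ℝ)} (hS : S ⊆ simpleRoots n)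
    {i j : Fin n} (hij : j < i) : eps n i - eps n j ∉ Nspan S := by
  intro hv
  have h0 := Fk_nonneg hS j hv
  rw [Fk_sub] at h0
  rw [if_neg (not_le.mpr hij), if_pos le_rfl] at h0
  norm_num at h0

def RP {n : ℕ} (Pp Pm : Set (Fin n → ℝ)) (i j : ℕ) : Prop :=
  (i < j ∧ SChain Pp i j) ∨ (j < i ∧ SChain Pm j i)

lemma mem_Rset_iff {n : ℕ} {Pp Pm : Set (Fin n → ℝ)}
    (hPp : Pp ⊆ simpleRoots n) (hPm : Pm ⊆ simpleRoots n)
    {i j : Fin n} (hij : i ≠ j) :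
    eps n i - eps n j ∈ Rset n Pp Pm ↔ RP Pp Pm i j := by
  rw [Rset, Set.mem_inter_iff, and_iff_left ⟨i, j, hij, rfl⟩, Set.mem_union,
    Set.mem_neg, neg_sub]
  have hij' : (i : ℕ) ≠ (j : ℕ) := fun h => hij (Fin.ext h)
  rcases Nat.lt_or_ge (i : ℕ) (j : ℕ) with hlt | hge
  · have hfin : i < j := hlt
    rw [nspan_pos_iff hPp hfin]
    simp only [nspan_neg hPm hfin, or_false]
    unfold RP
    constructor
    · exact fun h => Or.inl ⟨hlt, h⟩
    · rintro (⟨_, h⟩ | ⟨h, _⟩)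
      · exact h
      · omega
  · have hfin : j < i := by omega
    rw [nspan_pos_iff hPm hfin]
    simp only [nspan_neg hPp hfin, false_or]
    unfold RP
    constructor
    · exact fun h => Or.inr ⟨hfin, h⟩
    · rintro (⟨h, _⟩ | ⟨_, h⟩)
      · omega
      · exact h

lemma key1 {n : ℕ} {Pp Pm : Set (Fin n → ℝ)} {a b d : ℕ}
    (h1 : RP Pp Pm a b) (h2 : RP Pp Pm b d) (had : a ≠ d) : RP Pp Pm a d := by
  rcases h1 with ⟨hab, c1⟩ | ⟨hba, c1⟩ <;> rcases h2 with ⟨hbd, c2⟩ | ⟨hdb, c2⟩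
  · exact Or.inl ⟨by omega, c1.concat c2 (by omega)⟩
  · rcases Nat.lt_or_ge a d with h | h
    · exact Or.inl ⟨h, c1.mono le_rfl (by omega)⟩
    · exact Or.inr ⟨by omega, c2.mono le_rfl (by omega)⟩
  · rcases Nat.lt_or_ge a d with h | h
    · exact Or.inl ⟨h, c2.mono (by omega) le_rfl⟩
    · exact Or.inr ⟨by omega, c1.mono (by omega) le_rfl⟩
  · exact Or.inr ⟨by omega, c2.concat c1 (by omega)⟩

lemma key2 {n : ℕ} {Pp Pm : Set (Fin n → ℝ)} {a b d : ℕ}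
    (h1 : RP Pp Pm b a) (h1' : ¬ RP Pp Pm a b)
    (h2 : RP Pp Pm d b) (h2' : ¬ RP Pp Pm b d) (had : a ≠ d) :
    RP Pp Pm d a ∧ ¬ RP Pp Pm a d := by
  refine ⟨key1 h2 h1 (Ne.symm had), ?_⟩
  intro h3
  unfold RP at h1 h1' h2 h2' h3
  push_neg at h1' h2'
  rcases h1 with ⟨hba, c1⟩ | ⟨hab, c1⟩ <;> rcases h2 with ⟨hdb, c2⟩ | ⟨hbd, c2⟩ <;>
    rcases h3 with ⟨had', c3⟩ | ⟨hda, c3⟩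
  · omega
  · exact (h1'.2 hba) (c3.mono (by omega) le_rfl)
  · exact (h2'.1 hbd) (c1.concat c3 (by omega))
  · exact (h1'.2 hba) (c2.concat c3 (by omega))
  · exact (h1'.1 hab) (c3.concat c2 (by omega))
  · exact (h2'.2 hdb) (c3.concat c1 (by omega))
  · exact (h1'.1 hab) (c3.mono le_rfl (by omega))
  · omega

lemma mem_Rstar_iff {n : ℕ} {Pp Pm : Set (Fin n → ℝ)}
    (hPp : Pp ⊆ simpleRoots n) (hPm : Pm ⊆ simpleRoots n)
    {i j : Fin n} (hij : i ≠ j) :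
    eps n i - eps n j ∈ RstarSet n Pp Pm ↔ RP Pp Pm j i ∧ ¬ RP Pp Pm i j := by
  have hneg : eps n i - eps n j ∈ -Rset n Pp Pm ↔ RP Pp Pm j i := by
    rw [Set.mem_neg, neg_sub, mem_Rset_iff hPp hPm (Ne.symm hij)]
  rw [RstarSet, Set.mem_diff, hneg, Mset, Set.mem_inter_iff,
      mem_Rset_iff hPp hPm hij, hneg]
  tauto

/-- Section 1.8: both `R` and `R_*` are additively closed in `Δ`. -/
theorem statement_5 (n : ℕ) (hn : 2 ≤ n) (Pp Pm : Set (Fin n → ℝ))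
    (hPp : Pp ⊆ simpleRoots n) (hPm : Pm ⊆ simpleRoots n)
    (hU : Pp ∪ Pm = simpleRoots n) :
    (∀ α β : Fin n → ℝ, α ∈ Rset n Pp Pm → β ∈ Rset n Pp Pm →
      α + β ∈ Delta n → α + β ∈ Rset n Pp Pm) ∧
    (∀ α β : Fin n → ℝ, α ∈ RstarSet n Pp Pm → β ∈ RstarSet n Pp Pm →
      α + β ∈ Delta n → α + β ∈ RstarSet n Pp Pm) := by
  constructor
  · intro α β hα hβ hsum
    obtain ⟨a, b, hab, rfl⟩ := hα.2
    obtain ⟨c, d, hcd, hbe⟩ := hβ.2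
    subst hbe
    obtain ⟨p, q, hpq, hse⟩ := hsum
    have h1 := (mem_Rset_iff hPp hPm hab).mp hα
    have h2 := (mem_Rset_iff hPp hPm hcd).mp hβ
    rcases eps_decomp hab hcd hpq hse with ⟨hbc, hap, hdq⟩ | ⟨had, hcp, hbq⟩
    · subst hbc
      have had : a ≠ d := by rw [hap, hdq]; exact hpq
      rw [sub_add_sub_cancel, mem_Rset_iff hPp hPm had]
      exact key1 h1 h2 (fun h => had (Fin.ext h))
    · subst had
      have hcb : c ≠ b := by rw [hcp, hbq]; exact hpq
      have heq : eps n a - eps n b + (eps n c - eps n a) = eps n c - eps n b := by abel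
      rw [heq, mem_Rset_iff hPp hPm hcb]
      exact key1 h2 h1 (fun h => hcb (Fin.ext h))
  · intro α β hα hβ hsum
    obtain ⟨u, v, huv, hαe⟩ := (Set.mem_neg.mp hα.1).2
    obtain ⟨w, x, hwx, hβe⟩ := (Set.mem_neg.mp hβ.1).2
    have hαe' : α = eps n v - eps n u := by rw [← neg_sub, ← hαe, neg_neg]
    have hβe' : β = eps n x - eps n w := by rw [← neg_sub, ← hβe, neg_neg]
    subst hαe' hβe'
    obtain ⟨p, q, hpq, hse⟩ := hsum
    have h1 := (mem_Rstar_iff hPp hPm (Ne.symm huv)).mp hα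
    have h2 := (mem_Rstar_iff hPp hPm (Ne.symm hwx)).mp hβ
    rcases eps_decomp (Ne.symm huv) (Ne.symm hwx) hpq hse with
      ⟨hux, hvp, hwq⟩ | ⟨hvw, hxp, huq⟩
    · subst hux
      have hvw : v ≠ w := by rw [hvp, hwq]; exact hpq
      rw [sub_add_sub_cancel, mem_Rstar_iff hPp hPm hvw]
      exact key2 h1.1 h1.2 h2.1 h2.2 (fun h => hvw (Fin.ext h))
    · subst hvw
      have hxu : x ≠ u := by rw [hxp, huq]; exact hpq
      have heq : eps n v - eps n u + (eps n x - eps n v) = eps n x - eps n u := by abel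
      rw [heq, mem_Rstar_iff hPp hPm hxu]
      exact key2 h2.1 h2.2 h1.1 h1.2 (fun h => hxu (Fin.ext h))
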